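/- arXiv:1506.05866 — 4 statements merged into one kernel-verified Lean document; each statement's English description precedes it below -/
import Mathlib

section
/- Let φ(x) = Σᵢ φᵢ(xᵢ) where each φᵢ: ℝ → ℝ, each constraint set Xᵢ ⊆ ℝ contains 0, and r is a positive integer. Let x̃ᵢ* minimize φᵢ over Xᵢ, set vᵢ* = φᵢ(0) - φᵢ(x̃ᵢ*), and let I* be an index set of the r largest values among {vᵢ*}. Then the vector x* with xᵢ* = x̃ᵢ* for i ∈ I* and xᵢ* = 0 otherwise is a global minimizer of φ(x) subject to ‖x‖₀ ≤ r and x ∈ X₁ × ⋯ × Xₙ. -/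
/-- Separable `l₀`-constrained minimization: taking the coordinatewise minimizers on the
index set `I` of the `r` largest gains `vᵢ = φᵢ(0) - φᵢ(x̃ᵢ*)` and zero elsewhere yields a
global minimizer of `x ↦ ∑ᵢ φᵢ(xᵢ)` subject to `‖x‖₀ ≤ r` and `xᵢ ∈ Xᵢ`. -/
theorem stmt_3 {n : ℕ} (φ : Fin n → ℝ → ℝ) (X : Fin n → Set ℝ) (r : ℕ) (hr : 0 < r)
    (hX0 : ∀ i, (0 : ℝ) ∈ X i)
    (xt : Fin n → ℝ) (hxt : ∀ i, xt i ∈ X i)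
    (hmin : ∀ i, ∀ t ∈ X i, φ i (xt i) ≤ φ i t)
    (v : Fin n → ℝ) (hv : ∀ i, v i = φ i 0 - φ i (xt i))
    (I : Finset (Fin n)) (hI : I.card = r)
    (htop : ∀ i ∈ I, ∀ j ∉ I, v j ≤ v i)
    (xs : Fin n → ℝ) (hxs : xs = fun i => if i ∈ I then xt i else 0) :
    ({i | xs i ≠ 0}.ncard ≤ r ∧ ∀ i, xs i ∈ X i) ∧
      ∀ x : Fin n → ℝ, {i | x i ≠ 0}.ncard ≤ r → (∀ i, x i ∈ X i) →
        ∑ i, φ i (xs i) ≤ ∑ i, φ i (x i) := by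
  subst hxs
  have hv0 : ∀ i, 0 ≤ v i := fun i => by
    have := hmin i 0 (hX0 i); rw [hv]; linarith
  refine ⟨⟨?_, ?_⟩, ?_⟩
  · have hsub : {i | (if i ∈ I then xt i else 0) ≠ 0} ⊆ (↑I : Set (Fin n)) := by
      intro i hi
      by_contra h
      simp at hi
      exact h hi.1
    calc {i | (if i ∈ I then xt i else 0) ≠ 0}.ncard
        ≤ (↑I : Set (Fin n)).ncard := Set.ncard_le_ncard hsub I.finite_toSet
      _ = r := by rw [Set.ncard_coe_finset, hI]
  · intro i; dsimp only; split
    · exact hxt i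
    · exact hX0 i
  · intro x hcard hxX
    set S : Finset (Fin n) := Finset.univ.filter (fun i => x i ≠ 0) with hS
    have hScard : S.card ≤ r := by
      have : {i | x i ≠ 0} = (↑S : Set (Fin n)) := by
        ext i; simp [hS]
      rwa [this, Set.ncard_coe_finset] at hcard
    -- combinatorial step
    have hcardsd : (S \ I).card ≤ (I \ S).card := by
      have h1 := Finset.card_sdiff_add_card_inter S I
      have h2 := Finset.card_sdiff_add_card_inter I S
      rw [Finset.inter_comm] at h2
      omega
    have key : ∑ i ∈ S \ I, v i ≤ ∑ i ∈ I \ S, v i := by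
      rcases (I \ S).eq_empty_or_nonempty with he | hne
      · have : (S \ I).card = 0 := by rw [he] at hcardsd; simpa using hcardsd
        rw [Finset.card_eq_zero] at this
        simp [this, he]
      · obtain ⟨i0, hi0, hmin0⟩ := Finset.exists_min_image (I \ S) v hne
        have hi0I : i0 ∈ I := (Finset.mem_sdiff.mp hi0).1
        calc ∑ i ∈ S \ I, v i ≤ (S \ I).card • v i0 :=
              Finset.sum_le_card_nsmul _ _ _ (fun j hj =>
                htop i0 hi0I j (Finset.mem_sdiff.mp hj).2)
          _ ≤ (I \ S).card • v i0 := by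
              exact nsmul_le_nsmul_left (hv0 i0) hcardsd
          _ ≤ ∑ i ∈ I \ S, v i := Finset.card_nsmul_le_sum _ _ _ hmin0
    have hsumIS : ∑ i ∈ S, v i ≤ ∑ i ∈ I, v i := by
      have h1 : ∑ i ∈ S ∩ I, v i + ∑ i ∈ S \ I, v i = ∑ i ∈ S, v i :=
        Finset.sum_inter_add_sum_sdiff S I v
      have h2 : ∑ i ∈ I ∩ S, v i + ∑ i ∈ I \ S, v i = ∑ i ∈ I, v i :=
        Finset.sum_inter_add_sum_sdiff I S v
      rw [Finset.inter_comm] at h2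
      linarith
    -- express both objective values
    have e1 : ∑ i, (φ i 0 - φ i (if i ∈ I then xt i else 0)) = ∑ i ∈ I, v i := by
      have : ∀ i, φ i 0 - φ i (if i ∈ I then xt i else 0)
          = if i ∈ I then v i else 0 := by
        intro i; split <;> simp [hv]
      rw [Finset.sum_congr rfl (fun i _ => this i), Finset.sum_ite_mem,
        Finset.univ_inter]
    have e2 : ∑ i, (φ i 0 - φ i (x i)) ≤ ∑ i ∈ S, v i := by
      have hle : ∀ i, φ i 0 - φ i (x i) ≤ if i ∈ S then v i else 0 := by
        intro i
        by_cases hi : i ∈ S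
        · have := hmin i (x i) (hxX i)
          rw [if_pos hi, hv]; linarith
        · have hx0 : x i = 0 := by
            by_contra h; exact hi (Finset.mem_filter.mpr ⟨Finset.mem_univ i, h⟩)
          rw [if_neg hi, hx0]; simp
      calc ∑ i, (φ i 0 - φ i (x i)) ≤ ∑ i, (if i ∈ S then v i else 0) :=
            Finset.sum_le_sum (fun i _ => hle i)
        _ = ∑ i ∈ S, v i := by rw [Finset.sum_ite_mem, Finset.univ_inter]
    have := e1 ▸ hsumIS
    rw [Finset.sum_sub_distrib] at e1 e2
    linarith
end

section
/- Given a ∈ ℝⁿ, u ∈ [1/r, 1], and λ* ∈ ℝ satisfying Σ_{i ∈ I*} Π_{[0,u]}(aᵢ + λ*) = 1, where I* is an index set of the r largest entries of a, the vector x* defined by xᵢ* = Π_{[0,u]}(aᵢ + λ*) for i ∈ I* and xᵢ* = 0 otherwise is a global minimizer of ‖x - a‖² over the set F_r = {x ∈ ℝⁿ : Σᵢ xᵢ = 1, ‖x‖₀ ≤ r, 0 ≤ xᵢ ≤ u for all i}. -/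
/-- The projection onto `[0, u]`. -/
noncomputable def proj01 (u t : ℝ) : ℝ := min (max t 0) u

/-- The feasible region of the cardinality-constrained index-tracking problem. -/
def Fr (n r : ℕ) (u : ℝ) : Set (Fin n → ℝ) :=
  {x | ∑ i, x i = 1 ∧ {i | x i ≠ 0}.ncard ≤ r ∧ ∀ i, 0 ≤ x i ∧ x i ≤ u}

lemma proj01_mem (u t : ℝ) (hu : 0 ≤ u) : 0 ≤ proj01 u t ∧ proj01 u t ≤ u := by
  unfold proj01
  exact ⟨le_min (le_max_right _ _) hu, min_le_right _ _⟩

lemma proj_ineq (u s x : ℝ) (hx0 : 0 ≤ x) (hxu : x ≤ u) :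
    0 ≤ (x - proj01 u s) * (proj01 u s - s) := by
  have hu : (0:ℝ) ≤ u := hx0.trans hxu
  unfold proj01
  rcases le_total s 0 with h | h
  · rw [max_eq_right h, min_eq_left hu]
    nlinarith
  · rw [max_eq_left h]
    rcases le_total s u with h2 | h2
    · rw [min_eq_left h2]; nlinarith
    · rw [min_eq_right h2]; nlinarith

lemma supp_case {n : ℕ} (I : Finset (Fin n)) (a : Fin n → ℝ) (u lam : ℝ)
    (hlam : ∑ i ∈ I, proj01 u (a i + lam) = 1)
    (x : Fin n → ℝ) (hsum : ∑ i, x i = 1) (hbox : ∀ i, 0 ≤ x i ∧ x i ≤ u)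
    (hsupp : ∀ i, i ∉ I → x i = 0) :
    ∑ i, ((if i ∈ I then proj01 u (a i + lam) else 0) - a i) ^ 2
      ≤ ∑ i, (x i - a i) ^ 2 := by
  set y : Fin n → ℝ := fun i => if i ∈ I then proj01 u (a i + lam) else 0 with hy
  have hysum : ∑ i, y i = 1 := by
    rw [hy]
    simp only
    rw [Finset.sum_ite_mem, Finset.univ_inter]
    exact hlam
  have h1 : ∀ i, lam * (x i - y i) ≤ (x i - y i) * (y i - a i) := by
    intro i
    by_cases hi : i ∈ I
    · have hp := proj_ineq u (a i + lam) (x i) (hbox i).1 (hbox i).2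
      simp only [hy, if_pos hi]
      nlinarith [hp]
    · simp [hy, if_neg hi, hsupp i hi]
  have h2 : ∑ i, lam * (x i - y i) ≤ ∑ i, (x i - y i) * (y i - a i) :=
    Finset.sum_le_sum fun i _ => h1 i
  have h3 : ∑ i, lam * (x i - y i) = 0 := by
    rw [← Finset.mul_sum, Finset.sum_sub_distrib, hsum, hysum]; ring
  have h4 : ∑ i, (x i - a i) ^ 2
      = ∑ i, (y i - a i) ^ 2 + (∑ i, (x i - y i) ^ 2
        + 2 * ∑ i, (x i - y i) * (y i - a i)) := by
    rw [Finset.mul_sum, ← Finset.sum_add_distrib, ← Finset.sum_add_distrib]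
    exact Finset.sum_congr rfl fun i _ => by ring
  have h5 : 0 ≤ ∑ i, (x i - y i) ^ 2 := Finset.sum_nonneg fun i _ => sq_nonneg _
  linarith

lemma main_ind {n r : ℕ} (I : Finset (Fin n)) (hI : I.card = r)
    (a : Fin n → ℝ) (u lam : ℝ)
    (htop : ∀ i ∈ I, ∀ j ∉ I, a j ≤ a i)
    (hlam : ∑ i ∈ I, proj01 u (a i + lam) = 1) :
    ∀ N : ℕ, ∀ x : Fin n → ℝ,
      ((Finset.univ.filter fun i => x i ≠ 0) \ I).card ≤ N →
      ∑ i, x i = 1 → (Finset.univ.filter fun i => x i ≠ 0).card ≤ r →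
      (∀ i, 0 ≤ x i ∧ x i ≤ u) →
      ∑ i, ((if i ∈ I then proj01 u (a i + lam) else 0) - a i) ^ 2
        ≤ ∑ i, (x i - a i) ^ 2 := by
  intro N
  induction N with
  | zero =>
    intro x hcard hsum hr hbox
    apply supp_case I a u lam hlam x hsum hbox
    intro i hi
    by_contra hxi
    have hmem : i ∈ (Finset.univ.filter fun i => x i ≠ 0) \ I := by
      simp [hi, hxi]
    have := Finset.card_pos.mpr ⟨i, hmem⟩
    omega
  | succ N ih =>
    intro x hcard hsum hr hbox
    set S : Finset (Fin n) := Finset.univ.filter fun i => x i ≠ 0 with hS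
    by_cases h0 : (S \ I) = ∅
    · apply supp_case I a u lam hlam x hsum hbox
      intro i hi
      by_contra hxi
      have hmem : i ∈ S \ I := by simp [hS, hi, hxi]
      rw [h0] at hmem
      exact absurd hmem (Finset.notMem_empty i)
    · obtain ⟨j, hj⟩ := Finset.nonempty_iff_ne_empty.mpr h0
      have hjS : j ∈ S := (Finset.mem_sdiff.mp hj).1
      have hjI : j ∉ I := (Finset.mem_sdiff.mp hj).2
      have hxj : x j ≠ 0 := by
        have := hjS; rw [hS] at this; simpa using this
      -- find i0 ∈ I \ S
      have hne : (I \ S).Nonempty := by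
        rw [Finset.sdiff_nonempty]
        intro hsub
        have hcardle : S.card ≤ I.card := by omega
        have : I = S := Finset.eq_of_subset_of_card_le hsub hcardle
        rw [this] at hjI
        exact hjI hjS
      obtain ⟨i0, hi0⟩ := hne
      have hi0I : i0 ∈ I := (Finset.mem_sdiff.mp hi0).1
      have hi0S : i0 ∉ S := (Finset.mem_sdiff.mp hi0).2
      have hxi0 : x i0 = 0 := by
        by_contra h
        exact hi0S (by simp [hS, h])
      have hij : i0 ≠ j := fun h => hjI (h ▸ hi0I)
      set x' : Fin n → ℝ := fun i =>
        x i + (if i = i0 then x j else 0) - (if i = j then x j else 0) with hx'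
      have hx'i0 : x' i0 = x j := by simp [hx', hxi0, hij]
      have hx'j : x' j = 0 := by simp [hx', hij.symm]
      have hx'other : ∀ i, i ≠ i0 → i ≠ j → x' i = x i := by
        intro i h1 h2; simp [hx', h1, h2]
      have hx'sum : ∑ i, x' i = 1 := by
        rw [hx']
        simp only
        rw [Finset.sum_sub_distrib, Finset.sum_add_distrib]
        rw [Finset.sum_ite_eq' Finset.univ i0 (fun _ => x j),
          Finset.sum_ite_eq' Finset.univ j (fun _ => x j)]
        simp [hsum]
      have hx'box : ∀ i, 0 ≤ x' i ∧ x' i ≤ u := by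
        intro i
        by_cases h1 : i = i0
        · rw [h1, hx'i0]; exact hbox j
        · by_cases h2 : i = j
          · rw [h2, hx'j]
            exact ⟨le_refl _, (hbox j).1.trans (hbox j).2⟩
          · rw [hx'other i h1 h2]; exact hbox i
      set S' : Finset (Fin n) := Finset.univ.filter fun i => x' i ≠ 0 with hS'
      have hsub : S' ⊆ insert i0 (S.erase j) := by
        intro i hiS'
        have hxi' : x' i ≠ 0 := by
          have := hiS'; rw [hS'] at this; simpa using this
        by_cases h1 : i = i0
        · exact h1 ▸ Finset.mem_insert_self _ _
        · by_cases h2 : i = j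
          · exact absurd (h2 ▸ hx'j) hxi'
          · rw [hx'other i h1 h2] at hxi'
            exact Finset.mem_insert_of_mem
              (Finset.mem_erase.mpr ⟨h2, by simp [hS, hxi']⟩)
      have hScard : S'.card ≤ S.card := by
        calc S'.card ≤ (insert i0 (S.erase j)).card := Finset.card_le_card hsub
          _ ≤ (S.erase j).card + 1 := Finset.card_insert_le _ _
          _ = S.card - 1 + 1 := by rw [Finset.card_erase_of_mem hjS]
          _ ≤ S.card := by
              have : 0 < S.card := Finset.card_pos.mpr ⟨j, hjS⟩
              omega
      have hsub2 : S' \ I ⊆ (S \ I).erase j := by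
        intro i hi
        have hiS' : i ∈ S' := (Finset.mem_sdiff.mp hi).1
        have hiI : i ∉ I := (Finset.mem_sdiff.mp hi).2
        have h1 : i ≠ i0 := fun h => hiI (h ▸ hi0I)
        have hxi' : x' i ≠ 0 := by
          have := hiS'; rw [hS'] at this; simpa using this
        have h2 : i ≠ j := by
          intro h; exact hxi' (h ▸ hx'j)
        rw [hx'other i h1 h2] at hxi'
        exact Finset.mem_erase.mpr ⟨h2, Finset.mem_sdiff.mpr ⟨by simp [hS, hxi'], hiI⟩⟩
      have hcard' : (S' \ I).card ≤ N := by
        have h1 : (S' \ I).card ≤ ((S \ I).erase j).card := Finset.card_le_card hsub2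
        have h2 : ((S \ I).erase j).card = (S \ I).card - 1 :=
          Finset.card_erase_of_mem hj
        omega
      have hcost : ∑ i, (x' i - a i) ^ 2 ≤ ∑ i, (x i - a i) ^ 2 := by
        have e1 : ∑ i ∈ ({i0, j} : Finset (Fin n)), ((x' i - a i) ^ 2 - (x i - a i) ^ 2)
            = ∑ i, ((x' i - a i) ^ 2 - (x i - a i) ^ 2) := by
          apply Finset.sum_subset (Finset.subset_univ _)
          intro i _ hi
          have h1 : i ≠ i0 := fun h => hi (h ▸ Finset.mem_insert_self _ _)
          have h2 : i ≠ j := fun h => hi (h ▸ Finset.mem_insert_of_mem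
            (Finset.mem_singleton_self _))
          rw [hx'other i h1 h2]
          ring
        have hdiff : ∑ i, ((x' i - a i) ^ 2 - (x i - a i) ^ 2)
            = ((x' i0 - a i0) ^ 2 - (x i0 - a i0) ^ 2)
              + ((x' j - a j) ^ 2 - (x j - a j) ^ 2) :=
          e1.symm.trans (Finset.sum_pair hij)
        have hle : ((x' i0 - a i0) ^ 2 - (x i0 - a i0) ^ 2)
            + ((x' j - a j) ^ 2 - (x j - a j) ^ 2) ≤ 0 := by
          rw [hx'i0, hx'j, hxi0]
          have ha : a j ≤ a i0 := htop i0 hi0I j hjI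
          nlinarith [(hbox j).1]
        have := Finset.sum_sub_distrib (s := (Finset.univ : Finset (Fin n)))
          (f := fun i => (x' i - a i) ^ 2) (g := fun i => (x i - a i) ^ 2)
        rw [this] at hdiff
        linarith
      have := ih x' hcard' hx'sum (le_trans hScard hr) hx'box
      linarith

/-- Closed-form solution of the projection subproblem `min_{x ∈ F_r} ‖x - a‖²`:
with `I*` an index set of the `r` largest entries of `a` and `λ*` satisfying
`∑_{i ∈ I*} Π_{[0,u]}(aᵢ + λ*) = 1`, the vector `x*` with entries
`Π_{[0,u]}(aᵢ + λ*)` on `I*` and `0` elsewhere is a global minimizer. -/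
theorem stmt_5 {n r : ℕ} (hr : 0 < r) (hrn : r ≤ n) (a : Fin n → ℝ) (u lam : ℝ)
    (hu : 1 / (r : ℝ) ≤ u ∧ u ≤ 1)
    (I : Finset (Fin n)) (hI : I.card = r) (htop : ∀ i ∈ I, ∀ j ∉ I, a j ≤ a i)
    (hlam : ∑ i ∈ I, proj01 u (a i + lam) = 1)
    (xs : Fin n → ℝ) (hxs : xs = fun i => if i ∈ I then proj01 u (a i + lam) else 0) :
    xs ∈ Fr n r u ∧ ∀ x ∈ Fr n r u, ∑ i, (xs i - a i) ^ 2 ≤ ∑ i, (x i - a i) ^ 2 := by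
  have hrpos : (0:ℝ) < (r : ℝ) := by exact_mod_cast hr
  have hu0 : 0 ≤ u := le_trans (by positivity) hu.1
  have hncard : ∀ z : Fin n → ℝ,
      {i | z i ≠ 0}.ncard = (Finset.univ.filter fun i => z i ≠ 0).card := by
    intro z
    rw [show {i | z i ≠ 0} = ↑(Finset.univ.filter fun i => z i ≠ 0) by ext i; simp,
      Set.ncard_coe_finset]
  subst hxs
  constructor
  · refine ⟨?_, ?_, ?_⟩
    · rw [Finset.sum_ite_mem, Finset.univ_inter]; exact hlam
    · have hsub : {i | (if i ∈ I then proj01 u (a i + lam) else 0) ≠ 0} ⊆ ↑I := by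
        intro i hi
        simp only [Set.mem_setOf_eq] at hi
        by_contra h
        rw [Finset.mem_coe] at h
        rw [if_neg h] at hi
        exact hi rfl
      calc {i | (if i ∈ I then proj01 u (a i + lam) else 0) ≠ 0}.ncard
          ≤ (↑I : Set (Fin n)).ncard :=
            Set.ncard_le_ncard hsub (Set.toFinite _)
        _ = I.card := Set.ncard_coe_finset I
        _ ≤ r := le_of_eq hI
    · intro i
      by_cases hi : i ∈ I
      · simpa [hi] using proj01_mem u (a i + lam) hu0
      · simpa [hi] using hu0
  · rintro x ⟨hsum, hcard, hbox⟩
    rw [hncard x] at hcard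
    exact main_ind I hI a u lam htop hlam
      ((Finset.univ.filter fun i => x i ≠ 0) \ I).card x (le_refl _) hsum hcard hbox
end

section
/- Let f: ℝⁿ → ℝ be convex and differentiable, and let x* ∈ F_r with ‖x*‖₀ = r and support J*. If x* is a stationary point of the restricted problem min f(x) subject to Σᵢ xᵢ = 1, 0 ≤ xⱼ ≤ u for j ∈ J*, xⱼ = 0 for j ∉ J* (i.e., -∇f(x*) is in the normal cone of this convex feasible set at x*), then x* is a local minimizer of f over F_r = {x : Σᵢ xᵢ = 1, ‖x‖₀ ≤ r, 0 ≤ xᵢ ≤ u}. -/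
open scoped RealInnerProductSpace

/-- The feasible region of the cardinality-constrained index-tracking problem. -/
def FrE (n r : ℕ) (u : ℝ) : Set (EuclideanSpace ℝ (Fin n)) :=
  {x | ∑ i, x i = 1 ∧ {i | x i ≠ 0}.ncard ≤ r ∧ ∀ i, 0 ≤ x i ∧ x i ≤ u}

/-- First-order condition for a convex differentiable function. -/
lemma grad_ineq_aux {n : ℕ} (f : EuclideanSpace ℝ (Fin n) → ℝ)
    (hconv : ConvexOn ℝ Set.univ f) (g x y : EuclideanSpace ℝ (Fin n))
    (hg : HasGradientAt f g x) : f x + ⟪g, y - x⟫ ≤ f y := by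
  set v := y - x with hv
  have h1 : HasDerivAt (fun t : ℝ => t • v + x) v 0 := by
    simpa using ((hasDerivAt_id (0 : ℝ)).smul_const v).add_const x
  have h2 : HasDerivAt (fun t : ℝ => f (t • v + x)) ⟪g, v⟫ 0 := by
    have hF : HasFDerivAt f (InnerProductSpace.toDual ℝ _ g) ((0 : ℝ) • v + x) := by
      rw [zero_smul, zero_add]; exact hg.hasFDerivAt
    have := hF.comp_hasDerivAt (f := fun t : ℝ => t • v + x) 0 h1
    simpa [Function.comp_def, InnerProductSpace.toDual_apply_apply] using this
  have hφ : ConvexOn ℝ Set.univ (fun t : ℝ => f (t • v + x)) := by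
    have h3 := ConvexOn.comp_affineMap
      (AffineMap.lineMap x y : ℝ →ᵃ[ℝ] EuclideanSpace ℝ (Fin n)) hconv
    have h4 : ConvexOn ℝ Set.univ
        (f ∘ (AffineMap.lineMap x y : ℝ →ᵃ[ℝ] EuclideanSpace ℝ (Fin n))) := by
      simpa using h3
    refine h4.congr ?_
    intro t _
    simp [Function.comp, AffineMap.lineMap_apply, hv]
  have hslope := hφ.le_slope_of_hasDerivAt (Set.mem_univ (0 : ℝ))
    (Set.mem_univ (1 : ℝ)) one_pos h2
  rw [slope_def_field] at hslope
  simp only [one_smul, zero_smul, zero_add, sub_zero, div_one] at hslope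
  have hvx : v + x = y := by simp [hv]
  rw [hvx] at hslope
  linarith

/-- If `f` is convex and differentiable and `x* ∈ F_r` with `‖x*‖₀ = r` is a stationary
point of the restricted problem over `Ω̃` (the polytope fixing the support `J*` of `x*`),
i.e. `-∇f(x*)` lies in the normal cone of `Ω̃` at `x*`, then `x*` is a local minimizer of
`f` over `F_r`. -/
theorem stmt_9 {n r : ℕ} (hr : 0 < r) (u : ℝ) (hu : 1 / (r : ℝ) ≤ u ∧ u ≤ 1)
    (f : EuclideanSpace ℝ (Fin n) → ℝ) (hconv : ConvexOn ℝ Set.univ f)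
    (g xs : EuclideanSpace ℝ (Fin n)) (hgrad : HasGradientAt f g xs)
    (hxs : xs ∈ FrE n r u) (hsupp : {j | xs j ≠ 0}.ncard = r)
    (Ωt : Set (EuclideanSpace ℝ (Fin n)))
    (hΩt : Ωt = {x | ∑ i, x i = 1 ∧
      ∀ j, (xs j ≠ 0 → 0 ≤ x j ∧ x j ≤ u) ∧ (xs j = 0 → x j = 0)})
    (hstat : ∀ y ∈ Ωt, ⟪-g, y - xs⟫ ≤ 0) :
    IsLocalMinOn f (FrE n r u) xs := by
  classical
  set J : Set (Fin n) := {j | xs j ≠ 0} with hJ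
  set U : Set (EuclideanSpace ℝ (Fin n)) := ⋂ j ∈ J, {x | x j ≠ 0} with hU
  have hUopen : IsOpen U := by
    refine (J.toFinite).isOpen_biInter fun j _ => ?_
    have : {x : EuclideanSpace ℝ (Fin n) | x j ≠ 0} =
        (EuclideanSpace.proj (𝕜 := ℝ) j) ⁻¹' ({0}ᶜ) := rfl
    rw [this]
    exact isOpen_compl_singleton.preimage (EuclideanSpace.proj j).continuous
  have hxsU : xs ∈ U := by
    simp only [hU, Set.mem_iInter, Set.mem_setOf_eq]
    intro j hj
    exact hj
  -- key claim: every point of `FrE ∩ U` lies in `Ωt`, hence `f xs ≤ f x` there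
  have hkey : ∀ x ∈ FrE n r u, x ∈ U → f xs ≤ f x := by
    intro x hxF hxU
    obtain ⟨hsum, hcard, hbox⟩ := hxF
    have hJsub : J ⊆ {j | x j ≠ 0} := by
      intro j hj
      simp only [hU, Set.mem_iInter, Set.mem_setOf_eq] at hxU
      exact hxU j hj
    have hJeq : J = {j | x j ≠ 0} := by
      refine Set.eq_of_subset_of_ncard_le hJsub ?_ (Set.toFinite _)
      rw [hJ, hsupp]
      exact hcard
    have hxΩ : x ∈ Ωt := by
      rw [hΩt]
      refine ⟨hsum, fun j => ⟨fun _ => hbox j, fun hj0 => ?_⟩⟩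
      by_contra hxj
      have : j ∈ J := hJeq ▸ hxj
      exact this hj0
    have hst := hstat x hxΩ
    rw [inner_neg_left] at hst
    have hge : (0 : ℝ) ≤ ⟪g, x - xs⟫ := by linarith
    have := grad_ineq_aux f hconv g xs x hgrad
    linarith
  -- conclude: U is a neighborhood of xs
  have hmem : U ∈ nhdsWithin xs (FrE n r u) :=
    nhdsWithin_le_nhds (hUopen.mem_nhds hxsU)
  refine Filter.eventually_iff_exists_mem.2 ⟨U ∩ FrE n r u, ?_, ?_⟩
  · exact Filter.inter_mem hmem self_mem_nhdsWithin
  · rintro y ⟨hyU, hyF⟩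
    exact hkey y hyF hyU
end

section
/- If a sequence {x^k} in a compact set satisfies f(x^{k+1}) ≤ max_{[k-M]₊ ≤ i ≤ k} f(x^i) - (c/2)‖x^{k+1} - x^k‖² for all k with c > 0 and f continuous, then ‖x^{k+1} - x^k‖ → 0 and {f(x^k)} converges. -/
/-- If a sequence `{x^k}` in a compact set satisfies the nonmonotone descent condition
`f(x^{k+1}) ≤ max_{[k-M]₊ ≤ i ≤ k} f(x^i) - (c/2)‖x^{k+1} - x^k‖²` with `c > 0` and `f`
continuous, then `‖x^{k+1} - x^k‖ → 0` and `{f(x^k)}` converges. -/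
theorem stmt_12 {n : ℕ} (f : EuclideanSpace ℝ (Fin n) → ℝ) (hf : Continuous f)
    (K : Set (EuclideanSpace ℝ (Fin n))) (hK : IsCompact K)
    (x : ℕ → EuclideanSpace ℝ (Fin n)) (hx : ∀ k, x k ∈ K)
    (M : ℕ) (c : ℝ) (hc : 0 < c)
    (hdesc : ∀ k, f (x (k + 1)) ≤
      (Finset.Icc (k - M) k).sup' ⟨k, by simp⟩ (fun i => f (x i)) -
        c / 2 * ‖x (k + 1) - x k‖ ^ 2) :
    Filter.Tendsto (fun k => ‖x (k + 1) - x k‖) Filter.atTop (nhds 0) ∧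
      ∃ l, Filter.Tendsto (fun k => f (x k)) Filter.atTop (nhds l) := by
  classical
  set F : ℕ → ℝ := fun k => (Finset.Icc (k - M) k).sup' ⟨k, by simp⟩ (fun i => f (x i)) with hF
  set d : ℕ → ℝ := fun k => ‖x (k + 1) - x k‖ with hd
  have hd0 : ∀ k, 0 ≤ d k := fun k => norm_nonneg _
  have hterm : ∀ k, c / 2 * d k ^ 2 ≤ F k - f (x (k + 1)) := by
    intro k; have := hdesc k; simp only [hF, hd]; linarith
  have hFge : ∀ k, ∀ i ∈ Finset.Icc (k - M) k, f (x i) ≤ F k := by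
    intro k i hi; exact Finset.le_sup' (fun i => f (x i)) hi
  -- F is antitone
  have hstep : ∀ k, F (k + 1) ≤ F k := by
    intro k
    apply Finset.sup'_le
    intro i hi
    rw [Finset.mem_Icc] at hi
    rcases eq_or_lt_of_le hi.2 with h | h
    · subst h
      have := hterm k
      have h2 : 0 ≤ c / 2 * d k ^ 2 := by positivity
      linarith
    · exact hFge k i (Finset.mem_Icc.2 ⟨by omega, by omega⟩)
  have hanti : Antitone F := antitone_nat_of_succ_le hstep
  -- lower bound
  obtain ⟨z, hz, hmin⟩ := hK.exists_isMinOn ⟨x 0, hx 0⟩ hf.continuousOn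
  have hlb : ∀ k, f z ≤ F k := by
    intro k
    exact le_trans (hmin (hx k)) (hFge k k (Finset.mem_Icc.2 ⟨Nat.sub_le _ _, le_refl _⟩))
  have hbdd : BddBelow (Set.range F) := ⟨f z, by rintro _ ⟨k, rfl⟩; exact hlb k⟩
  set L : ℝ := ⨅ k, F k with hL
  have hFconv : Filter.Tendsto F Filter.atTop (nhds L) := tendsto_atTop_ciInf hanti hbdd
  -- argmax
  have hex : ∀ k, ∃ i ∈ Finset.Icc (k - M) k, F k = f (x i) :=
    fun k => Finset.exists_mem_eq_sup' ⟨k, by simp⟩ (fun i => f (x i))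
  choose ℓ hℓmem hℓeq using hex
  have hℓlb : ∀ k, k - M ≤ ℓ k := fun k => (Finset.mem_Icc.1 (hℓmem k)).1
  have hℓub : ∀ k, ℓ k ≤ k := fun k => (Finset.mem_Icc.1 (hℓmem k)).2
  -- uniform continuity
  have hUC : UniformContinuousOn f K := hK.uniformContinuousOn_of_continuous hf.continuousOn
  rw [Metric.uniformContinuousOn_iff] at hUC
  -- (ℓ k - j) → ∞
  have hℓtop : ∀ j : ℕ, Filter.Tendsto (fun k => ℓ k - j) Filter.atTop Filter.atTop := by
    intro j
    apply Filter.tendsto_atTop_mono (fun k => ?_) (Filter.tendsto_sub_atTop_nat (M + j))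
    have := hℓlb k; omega
  -- key step: if f(x^{ℓ k - j}) → L then d(ℓ k - (j+1)) → 0
  have hD : ∀ j : ℕ, Filter.Tendsto (fun k => f (x (ℓ k - j))) Filter.atTop (nhds L) →
      Filter.Tendsto (fun k => d (ℓ k - (j + 1))) Filter.atTop (nhds 0) := by
    intro j hPj
    have hsq : Filter.Tendsto (fun k => c / 2 * d (ℓ k - (j + 1)) ^ 2) Filter.atTop (nhds 0) := by
      apply squeeze_zero' (Filter.Eventually.of_forall (fun k => by positivity))
      · filter_upwards [Filter.eventually_ge_atTop (M + j + 1)] with k hk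
        have hge : j + 1 ≤ ℓ k := by have := hℓlb k; omega
        have heq : ℓ k - (j + 1) + 1 = ℓ k - j := by omega
        calc c / 2 * d (ℓ k - (j + 1)) ^ 2 ≤ F (ℓ k - (j + 1)) - f (x (ℓ k - (j + 1) + 1)) :=
              hterm _
          _ = F (ℓ k - (j + 1)) - f (x (ℓ k - j)) := by rw [heq]
      · have h1 : Filter.Tendsto (fun k => F (ℓ k - (j + 1))) Filter.atTop (nhds L) :=
          hFconv.comp (hℓtop (j + 1))
        have := h1.sub hPj
        simpa using this
    have hsq2 : Filter.Tendsto (fun k => d (ℓ k - (j + 1)) ^ 2) Filter.atTop (nhds 0) := by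
      have := hsq.const_mul (2 / c)
      have hc' : (2 : ℝ) / c * (c / 2) = 1 := by field_simp
      simpa [← mul_assoc, hc', mul_comm] using this
    have : Filter.Tendsto (fun k => Real.sqrt (d (ℓ k - (j + 1)) ^ 2)) Filter.atTop (nhds 0) := by
      have := (Real.continuous_sqrt.tendsto 0).comp hsq2
      simpa [Function.comp_def] using this
    exact this.congr (fun k => Real.sqrt_sq (hd0 _))
  -- main induction
  have hP : ∀ j : ℕ, Filter.Tendsto (fun k => f (x (ℓ k - j))) Filter.atTop (nhds L) := by
    intro j
    induction j with
    | zero =>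
      apply hFconv.congr
      intro k
      simpa using hℓeq k
    | succ j ih =>
      have hdj := hD j ih
      have hdiff : Filter.Tendsto (fun k => f (x (ℓ k - (j + 1))) - f (x (ℓ k - j)))
          Filter.atTop (nhds 0) := by
        rw [Metric.tendsto_atTop]
        intro ε hε
        obtain ⟨δ, hδ, hδε⟩ := hUC ε hε
        rw [Metric.tendsto_atTop] at hdj
        obtain ⟨N, hN⟩ := hdj δ hδ
        refine ⟨max N (M + j + 1), fun k hk => ?_⟩
        have hge : j + 1 ≤ ℓ k := by
          have := hℓlb k; have : M + j + 1 ≤ k := le_trans (le_max_right _ _) hk; omega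
        have heq : ℓ k - (j + 1) + 1 = ℓ k - j := by omega
        have hdk := hN k (le_trans (le_max_left _ _) hk)
        rw [Real.dist_eq, sub_zero, abs_of_nonneg (hd0 _)] at hdk
        have hdist : dist (x (ℓ k - (j + 1))) (x (ℓ k - j)) < δ := by
          rw [dist_eq_norm, ← heq]
          calc ‖x (ℓ k - (j + 1)) - x (ℓ k - (j + 1) + 1)‖
              = d (ℓ k - (j + 1)) := by rw [hd]; exact norm_sub_rev _ _
            _ < δ := hdk
        have := hδε _ (hx _) _ (hx _) hdist
        rw [Real.dist_eq] at this ⊢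
        simpa using this
      have := hdiff.add ih
      simpa using this
  -- Assemble. For a given ε > 0, choose uniform N over j ≤ M+1.
  have hDall : ∀ j : ℕ, Filter.Tendsto (fun k => d (ℓ k - (j + 1))) Filter.atTop (nhds 0) :=
    fun j => hD j (hP j)
  constructor
  · rw [Metric.tendsto_atTop]
    intro ε hε
    choose N hN using fun j => Metric.tendsto_atTop.1 (hDall j) ε hε
    refine ⟨(Finset.range (M + 1)).sup N, fun k hk => ?_⟩
    set m := k + M + 1 with hm
    set j := ℓ m - (k + 1) with hj
    have h1 : k + 1 ≤ ℓ m := by have := hℓlb m; omega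
    have hjM : j ≤ M := by have := hℓub m; omega
    have hkey : ℓ m - (j + 1) = k := by omega
    have hNj : N j ≤ m := by
      calc N j ≤ (Finset.range (M + 1)).sup N :=
            Finset.le_sup (Finset.mem_range.2 (by omega))
        _ ≤ k := hk
        _ ≤ m := by omega
    have := hN j m hNj
    rw [hkey] at this
    exact this
  · refine ⟨L, ?_⟩
    rw [← Filter.tendsto_add_atTop_iff_nat 1]
    rw [Metric.tendsto_atTop]
    intro ε hε
    choose N hN using fun j => Metric.tendsto_atTop.1 (hP j) ε hε
    refine ⟨(Finset.range (M + 1)).sup N, fun k hk => ?_⟩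
    set m := k + M + 1 with hm
    set j := ℓ m - (k + 1) with hj
    have h1 : k + 1 ≤ ℓ m := by have := hℓlb m; omega
    have hjM : j ≤ M := by have := hℓub m; omega
    have hkey : ℓ m - j = k + 1 := by omega
    have hNj : N j ≤ m := by
      calc N j ≤ (Finset.range (M + 1)).sup N :=
            Finset.le_sup (Finset.mem_range.2 (by omega))
        _ ≤ k := hk
        _ ≤ m := by omega
    have := hN j m hNj
    rw [hkey] at this
    exact this
end
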